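/- Let ξ = (ξ_1,...,ξ_d) ∼ Multinomial(N,p) with p ∈ S_d, and let m ∈ ℕ. Then E[Π_{i=1}^d (ξ_i − Np_i)^{2m}] = Σ_{k_1,...,k_d=0}^{2m} Σ_{j_1=0}^{k_1} ⋯ Σ_{j_d=0}^{k_d} N^(j_1+⋯+j_d) · Π_{i=1}^d [ C(2m,k_i) · S(k_i,j_i) · (−N)^{2m−k_i} · p_i^{2m−k_i+j_i} ]. -/

import Mathlib

/-- Falling factorial: `fallFac x j = x (x-1) ⋯ (x-j+1)`, with `fallFac x 0 = 1`. -/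
def fallFac (x : ℝ) : ℕ → ℝ
  | 0 => 1
  | n + 1 => fallFac x n * (x - n)

/-- Stirling numbers of the second kind. -/
def stirling2 : ℕ → ℕ → ℕ
  | 0, 0 => 1
  | 0, _ + 1 => 0
  | _ + 1, 0 => 0
  | k + 1, j + 1 => (j + 1) * stirling2 k (j + 1) + stirling2 k j

/-- Probability mass function of the `Multinomial(N, p)` distribution. -/
noncomputable def multPMF (d N : ℕ) (p : Fin d → ℝ) (k : Fin d → ℕ) : ℝ :=
  if (∑ i, k i) ≤ N then
    (Nat.factorial N : ℝ) /
        ((Nat.factorial (N - ∑ i, k i) : ℝ) * ∏ i, (Nat.factorial (k i) : ℝ)) *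
      (1 - ∑ i, p i) ^ (N - ∑ i, k i) * ∏ i, p i ^ k i
  else 0

/-- Expectation of `f ξ` for `ξ ∼ Multinomial(N, p)`. -/
noncomputable def multExp (d N : ℕ) (p : Fin d → ℝ) (f : (Fin d → ℕ) → ℝ) : ℝ :=
  ∑ k ∈ Fintype.piFinset fun _ : Fin d => Finset.range (N + 1), multPMF d N p k * f k

open Finset in
lemma fallFac_natCast (n : ℕ) : ∀ j : ℕ, fallFac (n : ℝ) j = (n.descFactorial j : ℝ)
  | 0 => by simp [fallFac]
  | j + 1 => by
    rw [fallFac, fallFac_natCast n j, Nat.descFactorial_succ]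
    rcases le_or_gt (j + 1) n with h | h
    · push_cast [Nat.cast_sub (Nat.le_of_succ_le h)]
      ring
    · rcases Nat.lt_or_ge n j with h' | h'
      · rw [Nat.descFactorial_of_lt h']; simp
      · have : n = j := by omega
        subst this; simp

lemma stirling2_eq_zero : ∀ k j : ℕ, k < j → stirling2 k j = 0
  | 0, j + 1, _ => rfl
  | k + 1, j + 1, h => by
    have h' : k < j := by omega
    rw [stirling2, stirling2_eq_zero k (j+1) (by omega), stirling2_eq_zero k j h', mul_zero]

lemma pow_eq_sum_stirling (x : ℝ) : ∀ k : ℕ,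
    x ^ k = ∑ j ∈ Finset.range (k + 1), (stirling2 k j : ℝ) * fallFac x j
  | 0 => by simp [stirling2, fallFac]
  | k + 1 => by
    have hx : ∀ j : ℕ, x * fallFac x j = fallFac x (j + 1) + j * fallFac x j := by
      intro j
      rw [fallFac]; ring
    rw [pow_succ, pow_eq_sum_stirling x k, Finset.sum_mul]
    rw [show ∑ j ∈ Finset.range (k+1), (stirling2 k j : ℝ) * fallFac x j * x
        = ∑ j ∈ Finset.range (k+1), ((stirling2 k j : ℝ) * fallFac x (j+1)
            + (stirling2 k j : ℝ) * ((j:ℝ) * fallFac x j)) from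
      Finset.sum_congr rfl fun j _ => by
        rw [mul_assoc, mul_comm (fallFac x j) x, hx]; ring]
    rw [Finset.sum_add_distrib]
    rw [Finset.sum_range_succ' (fun j => (stirling2 (k+1) j : ℝ) * fallFac x j) (k+1)]
    have h0 : (stirling2 (k + 1) 0 : ℝ) * fallFac x 0 = 0 := by
      simp [stirling2]
    rw [h0, add_zero]
    have h1 : ∀ j, (stirling2 (k+1) (j+1) : ℝ) * fallFac x (j+1)
        = (stirling2 k (j+1) : ℝ) * ((j:ℝ)+1) * fallFac x (j+1)
          + (stirling2 k j : ℝ) * fallFac x (j+1) := by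
      intro j
      show ((((j:ℕ)+1) * stirling2 k (j+1) + stirling2 k j : ℕ) : ℝ) * fallFac x (j+1) = _
      push_cast; ring
    simp only [h1, Finset.sum_add_distrib]
    rw [add_comm]
    congr 1
    · -- ∑ j ∈ range (k+1), stirling2 k j * (j * fallFac x j) = ∑ j ∈ range (k+1), stirling2 k (j+1) * (j+1) * fallFac x (j+1)
      rw [Finset.sum_range_succ' (fun j => (stirling2 k j : ℝ) * ((j:ℝ) * fallFac x j)) k]
      simp only [Nat.cast_zero, zero_mul, mul_zero, add_zero]
      rw [Finset.sum_range_succ (fun j => (stirling2 k (j+1) : ℝ) * ((j:ℝ)+1) * fallFac x (j+1)) k]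
      rw [stirling2_eq_zero k (k+1) (by omega)]
      push_cast
      rw [zero_mul, zero_mul, add_zero]
      apply Finset.sum_congr rfl
      intro j _
      push_cast
      ring

open Finset in
lemma sum_multPMF (d M : ℕ) (p : Fin d → ℝ) :
    ∑ k ∈ Fintype.piFinset (fun _ : Fin d => Finset.range (M + 1)), multPMF d M p k = 1 := by
  classical
  set U := (Finset.range (M + 1)).biUnion
      (fun n => Finset.piAntidiag (Finset.univ : Finset (Fin d)) n) with hU
  have hsub : U ⊆ Fintype.piFinset (fun _ : Fin d => Finset.range (M + 1)) := by
    intro k hk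
    simp only [hU, Finset.mem_biUnion, Finset.mem_range, Finset.mem_piAntidiag] at hk
    obtain ⟨n, hn, hsum, -⟩ := hk
    rw [Fintype.mem_piFinset]
    intro i
    rw [Finset.mem_range]
    have h1 : k i ≤ n := by
      rw [← hsum]
      exact Finset.single_le_sum (fun t _ => Nat.zero_le _) (Finset.mem_univ i)
    omega
  have hzero : ∀ k ∈ Fintype.piFinset (fun _ : Fin d => Finset.range (M + 1)),
      k ∉ U → multPMF d M p k = 0 := by
    intro k _ hk
    rcases le_or_gt (∑ i, k i) M with h | h
    · exact absurd (by
        simp only [hU, Finset.mem_biUnion, Finset.mem_range, Finset.mem_piAntidiag]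
        exact ⟨∑ i, k i, by omega, rfl, fun i _ => Finset.mem_univ i⟩) hk
    · rw [multPMF, if_neg (by omega)]
  rw [← Finset.sum_subset hsub hzero]
  have hdisj : (↑(Finset.range (M + 1)) : Set ℕ).PairwiseDisjoint
      (fun n => Finset.piAntidiag (Finset.univ : Finset (Fin d)) n) := by
    intro a _ b _ hab
    simp only [Function.onFun, Finset.disjoint_left]
    intro k hk hk'
    rw [Finset.mem_piAntidiag] at hk hk'
    exact hab (hk.1 ▸ hk'.1)
  rw [hU, Finset.sum_biUnion hdisj]
  have key : ∀ n ∈ Finset.range (M + 1),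
      ∑ k ∈ Finset.piAntidiag (Finset.univ : Finset (Fin d)) n, multPMF d M p k
        = (M.choose n : ℝ) * (1 - ∑ i, p i) ^ (M - n) * (∑ i, p i) ^ n := by
    intro n hn
    rw [Finset.mem_range] at hn
    have hnM : n ≤ M := by omega
    have term : ∀ k ∈ Finset.piAntidiag (Finset.univ : Finset (Fin d)) n,
        multPMF d M p k = (M.choose n : ℝ) * (1 - ∑ i, p i) ^ (M - n) *
          ((Nat.multinomial Finset.univ k : ℝ) * ∏ i, p i ^ k i) := by
      intro k hk
      rw [Finset.mem_piAntidiag] at hk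
      have hsum : ∑ i, k i = n := hk.1
      rw [multPMF, hsum, if_pos hnM]
      have hnat : (M.choose n) * (Nat.multinomial Finset.univ k) *
          ((M - n).factorial * ∏ i, (k i).factorial) = M.factorial := by
        have h1 := Nat.multinomial_spec (Finset.univ : Finset (Fin d)) k
        rw [hsum] at h1
        have h2 := Nat.choose_mul_factorial_mul_factorial hnM
        calc (M.choose n) * (Nat.multinomial Finset.univ k) *
            ((M - n).factorial * ∏ i, (k i).factorial)
            = (M.choose n) * ((∏ i, (k i).factorial) * Nat.multinomial Finset.univ k)
              * (M - n).factorial := by ring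
          _ = M.choose n * n.factorial * (M - n).factorial := by rw [h1]
          _ = M.factorial := h2
      have hden : ((M - n).factorial : ℝ) * ∏ i, ((k i).factorial : ℝ) ≠ 0 := by
        positivity
      have hcoef : (M.factorial : ℝ) / (((M - n).factorial : ℝ) * ∏ i, ((k i).factorial : ℝ))
          = (M.choose n : ℝ) * (Nat.multinomial Finset.univ k : ℝ) := by
        rw [div_eq_iff hden]
        push_cast [← hnat]
        ring
      rw [hcoef]
      ring
    rw [Finset.sum_congr rfl term]
    rw [← Finset.mul_sum, Finset.sum_pow_eq_sum_piAntidiag (Finset.univ : Finset (Fin d)) p n]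
  have := add_pow (∑ i, p i) (1 - ∑ i, p i) M
  rw [add_sub_cancel, one_pow] at this
  rw [Finset.sum_congr rfl key]
  refine Eq.trans (Finset.sum_congr rfl fun n _ => ?_) this.symm
  ring

open Finset in
lemma aux_alg (A A' C D F L q P Q : ℝ) (hD : D ≠ 0) (hF : F ≠ 0) (hL : L ≠ 0)
    (h : A = C * A') :
    A / (F * (D * L)) * q * (P * Q) * D = C * Q * (A' / (F * L) * q * P) := by
  subst h
  field_simp

open Finset in
lemma multExp_fallFac (d N : ℕ) (p : Fin d → ℝ) (j : Fin d → ℕ) :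
    multExp d N p (fun ξ => ∏ i, fallFac ((ξ i : ℕ) : ℝ) (j i))
      = fallFac (N : ℝ) (∑ i, j i) * ∏ i, p i ^ j i := by
  classical
  simp only [multExp, fallFac_natCast]
  rcases lt_or_ge N (∑ i, j i) with hjN | hjN
  · -- degenerate case: sum of j exceeds N
    rw [Nat.descFactorial_of_lt hjN]
    rw [Finset.sum_eq_zero, Nat.cast_zero, zero_mul]
    intro k hk
    by_cases hge : ∀ i, j i ≤ k i
    · have hs : N < ∑ i, k i := lt_of_lt_of_le hjN (Finset.sum_le_sum fun i _ => hge i)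
      rw [multPMF, if_neg (by omega), zero_mul]
    · push_neg at hge
      obtain ⟨i0, hi0⟩ := hge
      apply mul_eq_zero_of_right
      apply Finset.prod_eq_zero (Finset.mem_univ i0)
      rw [Nat.descFactorial_of_lt hi0, Nat.cast_zero]
  · set N' := N - ∑ i, j i with hN'
    have hNN' : N' + ∑ i, j i = N := by omega
    set B := Fintype.piFinset (fun _ : Fin d => Finset.range (N' + 1)) with hB
    set g : (Fin d → ℕ) → ℝ :=
      fun k => multPMF d N p k * ∏ i, ((k i).descFactorial (j i) : ℝ) with hg
    have hsub : B.image (fun l => l + j) ⊆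
        Fintype.piFinset (fun _ : Fin d => Finset.range (N + 1)) := by
      intro k hk
      rw [Finset.mem_image] at hk
      obtain ⟨l, hl, rfl⟩ := hk
      rw [Fintype.mem_piFinset] at hl ⊢
      intro i
      have h1 := hl i
      rw [Finset.mem_range] at h1 ⊢
      have h2 : j i ≤ ∑ t, j t :=
        Finset.single_le_sum (fun t _ => Nat.zero_le _) (Finset.mem_univ i)
      have : (l + j) i = l i + j i := rfl
      omega
    have hoff : ∀ k ∈ Fintype.piFinset (fun _ : Fin d => Finset.range (N + 1)),
        k ∉ B.image (fun l => l + j) → g k = 0 := by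
      intro k _ hk
      by_cases hge : ∀ i, j i ≤ k i
      · by_cases hmem : ∀ i0, k i0 - j i0 ≤ N'
        · exact absurd (Finset.mem_image.2 ⟨fun i => k i - j i, by
            rw [Fintype.mem_piFinset]
            intro i; rw [Finset.mem_range]
            exact Nat.lt_succ_of_le (hmem i), funext fun i => by
              show k i - j i + j i = k i
              exact Nat.sub_add_cancel (hge i)⟩) hk
        · push_neg at hmem
          obtain ⟨i0, hi0⟩ := hmem
          have e1 : ∑ t, k t = k i0 + ∑ t ∈ Finset.univ.erase i0, k t :=
            (Finset.add_sum_erase _ _ (Finset.mem_univ i0)).symm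
          have e2 : ∑ t, j t = j i0 + ∑ t ∈ Finset.univ.erase i0, j t :=
            (Finset.add_sum_erase _ _ (Finset.mem_univ i0)).symm
          have e3 : ∑ t ∈ Finset.univ.erase i0, j t ≤ ∑ t ∈ Finset.univ.erase i0, k t :=
            Finset.sum_le_sum fun t _ => hge t
          have hge0 := hge i0
          have hs : N < ∑ t, k t := by omega
          simp only [hg, multPMF]
          rw [if_neg (by omega), zero_mul]
      · push_neg at hge
        obtain ⟨i0, hi0⟩ := hge
        apply mul_eq_zero_of_right
        apply Finset.prod_eq_zero (Finset.mem_univ i0)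
        rw [Nat.descFactorial_of_lt hi0, Nat.cast_zero]
    have hinj : Set.InjOn (fun l => l + j) B := fun a _ b _ h => by
      funext i
      have := congrFun h i
      simpa using this
    rw [← Finset.sum_subset hsub hoff, Finset.sum_image hinj]
    have hterm : ∀ l ∈ B, g (l + j)
        = ((N.descFactorial (∑ i, j i) : ℝ) * ∏ i, p i ^ j i) * multPMF d N' p l := by
      intro l hl
      have hadd : ∀ i, (l + j) i = l i + j i := fun i => rfl
      have hsum : ∑ i, (l + j) i = (∑ i, l i) + ∑ i, j i := by
        simp [hadd, Finset.sum_add_distrib]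
      rcases le_or_gt (∑ i, l i) N' with hls | hls
      · have hcond : ∑ i, (l + j) i ≤ N := by omega
        simp only [hg, multPMF]
        rw [if_pos hcond, if_pos hls, hsum]
        have hA : N - ((∑ i, l i) + ∑ i, j i) = N' - ∑ i, l i := by omega
        rw [hA]
        have hfac1 : ((N').factorial : ℝ) * (N.descFactorial (∑ i, j i) : ℝ)
            = (N.factorial : ℝ) := by
          rw [← Nat.cast_mul, Nat.factorial_mul_descFactorial hjN]
        have hfac2 : ∏ i, (((l + j) i).factorial : ℝ)
            = (∏ i, (((l + j) i).descFactorial (j i) : ℝ)) * ∏ i, ((l i).factorial : ℝ) := by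
          rw [← Finset.prod_mul_distrib]
          apply Finset.prod_congr rfl
          intro i _
          rw [← Nat.cast_mul]
          congr 1
          rw [hadd]
          have := Nat.factorial_mul_descFactorial (Nat.le_add_left (j i) (l i))
          rw [Nat.add_sub_cancel] at this
          rw [← this]; ring
        have hps : ∏ i, p i ^ ((l + j) i) = (∏ i, p i ^ l i) * ∏ i, p i ^ j i := by
          rw [← Finset.prod_mul_distrib]
          exact Finset.prod_congr rfl fun i _ => by rw [hadd, pow_add]
        rw [hfac2, hps]
        have hd1 : ((N' - ∑ i, l i).factorial : ℝ) ≠ 0 := by positivity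
        have hd2 : ∏ i, ((l i).factorial : ℝ) ≠ 0 := by positivity
        have hd3 : (∏ i, (((l + j) i).descFactorial (j i) : ℝ)) ≠ 0 := by
          apply Finset.prod_ne_zero_iff.2
          intro i _
          have hne : ((l + j) i).descFactorial (j i) ≠ 0 := by
            rw [Ne, Nat.descFactorial_eq_zero_iff_lt, hadd]
            omega
          exact_mod_cast hne
        exact aux_alg _ _ _ _ _ _ _ _ _ hd3 hd1 hd2 (by rw [← hfac1]; ring)
      · have hcond : ¬ (∑ i, (l + j) i ≤ N) := by omega
        simp only [hg, multPMF]
        rw [if_neg hcond, if_neg (show ¬ (∑ i, l i ≤ N') by omega), zero_mul, mul_zero]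
    rw [Finset.sum_congr rfl hterm, ← Finset.mul_sum, sum_multPMF, mul_one]

/-- Expansion of the centered multinomial mixed moment `E[∏_i (ξ_i - Np_i)^{2m}]` in terms
of falling factorials and Stirling numbers of the second kind. -/
theorem multinomial_central_moment_expansion (d N : ℕ) (p : Fin d → ℝ)
    (hp0 : ∀ i, 0 ≤ p i) (hp1 : ∀ i, p i ≤ 1) (hps : ∑ i, p i ≤ 1) (m : ℕ) :
    multExp d N p (fun ξ => ∏ i, ((ξ i : ℝ) - N * p i) ^ (2 * m)) =
      ∑ k ∈ Fintype.piFinset fun _ : Fin d => Finset.range (2 * m + 1),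
        ∑ j ∈ Fintype.piFinset fun i : Fin d => Finset.range (k i + 1),
          fallFac (N : ℝ) (∑ i, j i) *
            ∏ i, (((2 * m).choose (k i) : ℝ) * (stirling2 (k i) (j i) : ℝ) *
              (-(N : ℝ)) ^ (2 * m - k i) * p i ^ (2 * m - k i + j i)) := by
  classical
  have expand : ∀ ξ : Fin d → ℕ,
      (∏ i, ((ξ i : ℝ) - N * p i) ^ (2 * m)) =
        ∑ k ∈ Fintype.piFinset fun _ : Fin d => Finset.range (2 * m + 1),
          ∑ j ∈ Fintype.piFinset fun i : Fin d => Finset.range (k i + 1),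
            (∏ i, (((2 * m).choose (k i) : ℝ) * (stirling2 (k i) (j i) : ℝ) *
                (-((N : ℝ) * p i)) ^ (2 * m - k i))) *
              ∏ i, fallFac ((ξ i : ℕ) : ℝ) (j i) := by
    intro ξ
    have h1 : ∀ i : Fin d, ((ξ i : ℝ) - N * p i) ^ (2 * m)
        = ∑ k ∈ Finset.range (2 * m + 1), ∑ jj ∈ Finset.range (k + 1),
            (((2 * m).choose k : ℝ) * (stirling2 k jj : ℝ) * (-((N : ℝ) * p i)) ^ (2 * m - k)) *
              fallFac ((ξ i : ℕ) : ℝ) jj := by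
      intro i
      rw [sub_eq_add_neg, add_pow]
      apply Finset.sum_congr rfl
      intro k _
      rw [pow_eq_sum_stirling ((ξ i : ℕ) : ℝ) k, Finset.sum_mul, Finset.sum_mul]
      apply Finset.sum_congr rfl
      intro jj _
      ring
    rw [Finset.prod_congr rfl fun i _ => h1 i, Finset.prod_univ_sum]
    apply Finset.sum_congr rfl
    intro k _
    rw [Finset.prod_univ_sum (fun i => Finset.range (k i + 1))]
    apply Finset.sum_congr rfl
    intro j _
    rw [← Finset.prod_mul_distrib]
  have hfun : (fun ξ : Fin d → ℕ => ∏ i, ((ξ i : ℝ) - N * p i) ^ (2 * m))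
      = fun ξ => ∑ k ∈ Fintype.piFinset fun _ : Fin d => Finset.range (2 * m + 1),
          ∑ j ∈ Fintype.piFinset fun i : Fin d => Finset.range (k i + 1),
            (∏ i, (((2 * m).choose (k i) : ℝ) * (stirling2 (k i) (j i) : ℝ) *
                (-((N : ℝ) * p i)) ^ (2 * m - k i))) *
              ∏ i, fallFac ((ξ i : ℕ) : ℝ) (j i) := funext expand
  rw [hfun]
  unfold multExp
  simp only [Finset.mul_sum]
  rw [Finset.sum_comm]
  apply Finset.sum_congr rfl
  intro k _
  rw [Finset.sum_comm]
  apply Finset.sum_congr rfl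
  intro j _
  have hlin : ∑ x ∈ Fintype.piFinset fun _ : Fin d => Finset.range (N + 1),
      multPMF d N p x *
        ((∏ i, (((2 * m).choose (k i) : ℝ) * (stirling2 (k i) (j i) : ℝ) *
            (-((N : ℝ) * p i)) ^ (2 * m - k i))) * ∏ i, fallFac ((x i : ℕ) : ℝ) (j i))
      = (∏ i, (((2 * m).choose (k i) : ℝ) * (stirling2 (k i) (j i) : ℝ) *
            (-((N : ℝ) * p i)) ^ (2 * m - k i))) *
          multExp d N p (fun ξ => ∏ i, fallFac ((ξ i : ℕ) : ℝ) (j i)) := by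
    unfold multExp
    rw [Finset.mul_sum]
    apply Finset.sum_congr rfl
    intro x _
    ring
  rw [hlin, multExp_fallFac]
  rw [mul_comm (fallFac (N : ℝ) (∑ i, j i)), ← mul_assoc, ← Finset.prod_mul_distrib, mul_comm]
  congr 1
  apply Finset.prod_congr rfl
  intro i _
  rw [neg_mul_eq_neg_mul, mul_pow, pow_add]
  ring
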